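/- For every α > 1, setting g : ℕ → ℕ by g(t) = ⌈32·α⌉·t², the class Q_g is not η-subtractive α-robustly learnable for any η with 0 < η ≤ 1/(16α). -/

import Mathlib

open scoped BigOperators ENNReal

namespace RobustDistLearn

variable {X : Type*}

/-- `p` is a probability mass function on `X`. -/
def IsPMF (p : X → ℝ) : Prop := (∀ x, 0 ≤ p x) ∧ ∑' x, p x = 1

/-- Total variation distance between two mass functions:
`d_TV(p,q) = (1/2)·∑ₓ |p x − q x|`. -/
noncomputable def dTV (p q : X → ℝ) : ℝ := (1 / 2) * ∑' x, |p x - q x|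

/-- The probability, over a sample `S` of `n` i.i.d. draws from `p`, of the event `E`. -/
noncomputable def iidProb (p : X → ℝ) (n : ℕ) (E : Set (Fin n → X)) : ℝ :=
  ∑' S : Fin n → X, E.indicator (fun T => ∏ i, p (T i)) S

/-- The mixture `η·q + (1−η)·p`. -/
def mix (η : ℝ) (q p : X → ℝ) : X → ℝ := fun x => η * q x + (1 - η) * p x

/-- `inf_{p' ∈ C} d_TV(p, p')`. -/
noncomputable def distToClass (p : X → ℝ) (C : Set (X → ℝ)) : ℝ := sInf (dTV p '' C)

/-- A learner maps, for each sample size `n`, a tuple `S ∈ Xⁿ` to a distribution over `X`. -/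
def IsLearner (A : (n : ℕ) → (Fin n → X) → (X → ℝ)) : Prop := ∀ n S, IsPMF (A n S)

/-- Realizable learnability of a class `C` of distributions. -/
def RealizablyLearnable (C : Set (X → ℝ)) : Prop :=
  ∃ A : (n : ℕ) → (Fin n → X) → (X → ℝ), IsLearner A ∧
    ∃ nC : ℝ → ℝ → ℕ,
      ∀ p ∈ C, ∀ ε ∈ Set.Ioo (0:ℝ) 1, ∀ δ ∈ Set.Ioo (0:ℝ) 1, ∀ n : ℕ, nC ε δ ≤ n →
        1 - δ ≤ iidProb p n {S | dTV (A n S) p ≤ ε}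

/-- `α`-robust (agnostic) learnability. -/
def RobustlyLearnable (C : Set (X → ℝ)) (α : ℝ) : Prop :=
  ∃ A : (n : ℕ) → (Fin n → X) → (X → ℝ), IsLearner A ∧
    ∃ nC : ℝ → ℝ → ℕ,
      ∀ p : X → ℝ, IsPMF p → ∀ ε ∈ Set.Ioo (0:ℝ) 1, ∀ δ ∈ Set.Ioo (0:ℝ) 1, ∀ n : ℕ, nC ε δ ≤ n →
        1 - δ ≤ iidProb p n {S | dTV (A n S) p ≤ α * distToClass p C + ε}

/-- Additive `α`-robust learnability. -/
def AdditiveRobustlyLearnable (C : Set (X → ℝ)) (α : ℝ) : Prop :=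
  ∃ A : (n : ℕ) → (Fin n → X) → (X → ℝ), IsLearner A ∧
    ∃ nC : ℝ → ℝ → ℕ,
      ∀ η ∈ Set.Ioo (0:ℝ) 1, ∀ q : X → ℝ, IsPMF q → ∀ p ∈ C,
        ∀ ε ∈ Set.Ioo (0:ℝ) 1, ∀ δ ∈ Set.Ioo (0:ℝ) 1, ∀ n : ℕ, nC ε δ ≤ n →
          1 - δ ≤ iidProb (mix η q p) n {S | dTV (A n S) (mix η q p) ≤ α * η + ε}

/-- Huber additive `α`-robust learnability: the guarantee is with respect to the clean `p`. -/
def HuberAdditiveRobustlyLearnable (C : Set (X → ℝ)) (α : ℝ) : Prop :=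
  ∃ A : (n : ℕ) → (Fin n → X) → (X → ℝ), IsLearner A ∧
    ∃ nC : ℝ → ℝ → ℕ,
      ∀ η ∈ Set.Ioo (0:ℝ) 1, ∀ q : X → ℝ, IsPMF q → ∀ p ∈ C,
        ∀ ε ∈ Set.Ioo (0:ℝ) 1, ∀ δ ∈ Set.Ioo (0:ℝ) 1, ∀ n : ℕ, nC ε δ ≤ n →
          1 - δ ≤ iidProb (mix η q p) n {S | dTV (A n S) p ≤ α * η + ε}

/-- Subtractive `α`-robust learnability. -/
def SubtractiveRobustlyLearnable (C : Set (X → ℝ)) (α : ℝ) : Prop :=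
  ∃ A : (n : ℕ) → (Fin n → X) → (X → ℝ), IsLearner A ∧
    ∃ nC : ℝ → ℝ → ℕ,
      ∀ η ∈ Set.Ioo (0:ℝ) 1, ∀ p : X → ℝ, IsPMF p →
        (∃ q : X → ℝ, IsPMF q ∧ mix η q p ∈ C) →
        ∀ ε ∈ Set.Ioo (0:ℝ) 1, ∀ δ ∈ Set.Ioo (0:ℝ) 1, ∀ n : ℕ, nC ε δ ≤ n →
          1 - δ ≤ iidProb p n {S | dTV (A n S) p ≤ α * η + ε}

/-- `η`-`α`-robust learnability (known corruption level `η`). -/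
def EtaRobustlyLearnable (C : Set (X → ℝ)) (η α : ℝ) : Prop :=
  ∃ A : (n : ℕ) → (Fin n → X) → (X → ℝ), IsLearner A ∧
    ∃ nC : ℝ → ℝ → ℕ,
      ∀ p : X → ℝ, IsPMF p → distToClass p C ≤ η →
        ∀ ε ∈ Set.Ioo (0:ℝ) 1, ∀ δ ∈ Set.Ioo (0:ℝ) 1, ∀ n : ℕ, nC ε δ ≤ n →
          1 - δ ≤ iidProb p n {S | dTV (A n S) p ≤ α * η + ε}

/-- `η`-additive `α`-robust learnability (known corruption level `η`). -/
def EtaAdditiveRobustlyLearnable (C : Set (X → ℝ)) (η α : ℝ) : Prop :=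
  ∃ A : (n : ℕ) → (Fin n → X) → (X → ℝ), IsLearner A ∧
    ∃ nC : ℝ → ℝ → ℕ,
      ∀ q : X → ℝ, IsPMF q → ∀ p ∈ C,
        ∀ ε ∈ Set.Ioo (0:ℝ) 1, ∀ δ ∈ Set.Ioo (0:ℝ) 1, ∀ n : ℕ, nC ε δ ≤ n →
          1 - δ ≤ iidProb (mix η q p) n {S | dTV (A n S) (mix η q p) ≤ α * η + ε}

/-- `η`-subtractive `α`-robust learnability (known corruption level `η`). -/
def EtaSubtractiveRobustlyLearnable (C : Set (X → ℝ)) (η α : ℝ) : Prop :=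
  ∃ A : (n : ℕ) → (Fin n → X) → (X → ℝ), IsLearner A ∧
    ∃ nC : ℝ → ℝ → ℕ,
      ∀ p : X → ℝ, IsPMF p →
        (∃ q : X → ℝ, IsPMF q ∧ mix η q p ∈ C) →
        ∀ ε ∈ Set.Ioo (0:ℝ) 1, ∀ δ ∈ Set.Ioo (0:ℝ) 1, ∀ n : ℕ, nC ε δ ≤ n →
          1 - δ ≤ iidProb p n {S | dTV (A n S) p ≤ α * η + ε}

/-- The probability of an event under a `PMF`. -/
noncomputable def pmfProb {Y : Type*} (m : PMF Y) (E : Set Y) : ℝ :=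
  (m.toOuterMeasure E).toReal

/-- `(ε,δ)`-differential privacy of a randomized algorithm on inputs of size `n`. -/
def IsDP {Y : Type*} {n : ℕ} (M : (Fin n → X) → PMF Y) (ε δ : ℝ) : Prop :=
  ∀ x x' : Fin n → X, (∃ i : Fin n, ∀ j : Fin n, j ≠ i → x j = x' j) →
    ∀ B : Set Y,
      (M x).toOuterMeasure B ≤
        ENNReal.ofReal (Real.exp ε) * (M x').toOuterMeasure B + ENNReal.ofReal δ

/-- Probability, jointly over `S ~ pⁿ` and the internal randomness of `M`, of the event `E`
on the output of `M`. -/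
noncomputable def randIidProb {Y : Type*} (p : X → ℝ) (n : ℕ)
    (M : (Fin n → X) → PMF Y) (E : Set Y) : ℝ :=
  ∑' S : Fin n → X, (∏ i, p (S i)) * pmfProb (M S) E

/-- Approximate DP learnability. -/
def ApproxDPLearnable (C : Set (X → ℝ)) : Prop :=
  ∃ Alg : (n : ℕ) → (Fin n → X) → PMF (X → ℝ),
    (∀ n S f, f ∈ (Alg n S).support → IsPMF f) ∧
    ∃ nC : ℝ → ℝ → ℝ → ℝ → ℕ,
      ∀ p ∈ C, ∀ α ∈ Set.Ioo (0:ℝ) 1, ∀ β ∈ Set.Ioo (0:ℝ) 1,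
        ∀ ε ∈ Set.Ioo (0:ℝ) 1, ∀ δ ∈ Set.Ioo (0:ℝ) 1, ∀ n : ℕ, nC α β ε δ ≤ n →
          IsDP (Alg n) ε δ ∧
          1 - β ≤ randIidProb p n (Alg n) {f | dTV p f ≤ α}

/-- Pure DP learnability. -/
def PureDPLearnable (C : Set (X → ℝ)) : Prop :=
  ∃ Alg : (n : ℕ) → (Fin n → X) → PMF (X → ℝ),
    (∀ n S f, f ∈ (Alg n S).support → IsPMF f) ∧
    ∃ nC : ℝ → ℝ → ℝ → ℕ,
      ∀ p ∈ C, ∀ α ∈ Set.Ioo (0:ℝ) 1, ∀ β ∈ Set.Ioo (0:ℝ) 1, ∀ ε ∈ Set.Ioo (0:ℝ) 1,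
        ∀ n : ℕ, nC α β ε ≤ n →
          IsDP (Alg n) ε 0 ∧
          1 - β ≤ randIidProb p n (Alg n) {f | dTV p f ≤ α}

/-- `α`-robust learnability by a possibly randomized learner. -/
def RandRobustlyLearnable (C : Set (X → ℝ)) (α : ℝ) : Prop :=
  ∃ Alg : (n : ℕ) → (Fin n → X) → PMF (X → ℝ),
    (∀ n S f, f ∈ (Alg n S).support → IsPMF f) ∧
    ∃ nC : ℝ → ℝ → ℕ,
      ∀ p : X → ℝ, IsPMF p → ∀ ε ∈ Set.Ioo (0:ℝ) 1, ∀ δ ∈ Set.Ioo (0:ℝ) 1,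
        ∀ n : ℕ, nC ε δ ≤ n →
          1 - δ ≤ randIidProb p n (Alg n) {f | dTV f p ≤ α * distToClass p C + ε}

/-- A class `C` admits `(τ, t, nf)` `r`-robust sample compression. -/
def AdmitsCompression (C : Set (X → ℝ)) (τ t nf : ℝ → ℕ) (r : ℝ) : Prop :=
  ∃ J : List X → List Bool → (X → ℝ),
    (∀ L B, J L B ∈ C) ∧
    ∀ q ∈ C, ∀ p : X → ℝ, IsPMF p → dTV p q ≤ r →
      ∀ ε ∈ Set.Ioo (0:ℝ) 1,
        (2 : ℝ) / 3 ≤ iidProb p (nf ε)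
          {S | ∃ L : List X, ∃ B : List Bool,
            L.length ≤ τ ε ∧ (∀ x ∈ L, ∃ i, S i = x) ∧ B.length ≤ t ε ∧
            dTV (J L B) q ≤ r + ε}

/-- The distribution `q_{i,j,k} = (1−1/j)·δ_{(0,0)} + (1/j − 1/k)·U_{A_i×{2j+1}} + (1/k)·δ_{(i,2j+2)}`
over `ℕ × ℕ`, for a given enumeration `A` of the finite nonempty subsets of `ℕ`. -/
noncomputable def qDist (A : ℕ → Finset ℕ) (i j k : ℕ) : ℕ × ℕ → ℝ := fun x =>
  (if x = (0, 0) then 1 - 1 / (j : ℝ) else 0) +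
  (if x.1 ∈ A i ∧ x.2 = 2 * j + 1 then (1 / (j : ℝ) - 1 / (k : ℝ)) / ((A i).card : ℝ) else 0) +
  (if x = (i, 2 * j + 2) then 1 / (k : ℝ) else 0)

/-- The class `Q_g = {q_{i,j,g(j)} : i, j ∈ ℕ, j ≥ 1}`. -/
def Qg (A : ℕ → Finset ℕ) (g : ℕ → ℕ) : Set (ℕ × ℕ → ℝ) :=
  {p | ∃ i j : ℕ, 1 ≤ j ∧ p = qDist A i j (g j)}

/-- The distribution `(1−γ)·δ_{(0,0)} + γ·U_{B×{2j+1}}` over `ℕ × ℕ`. -/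
noncomputable def pDist (γ : ℝ) (B : Finset ℕ) (j : ℕ) : ℕ × ℕ → ℝ := fun x =>
  (if x = (0, 0) then 1 - γ else 0) +
  (if x.1 ∈ B ∧ x.2 = 2 * j + 1 then γ / (B.card : ℝ) else 0)

/-- `g : ℕ → ℕ` is superlinear: `g(t)/t → ∞`. -/
def Superlinear (g : ℕ → ℕ) : Prop :=
  Filter.Tendsto (fun t : ℕ => (g t : ℝ) / (t : ℝ)) Filter.atTop Filter.atTop




section Aux

private lemma pmf_summable {X : Type*} {f : X → ℝ} (hf : IsPMF f) : Summable f := by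
  by_contra h
  have h0 := tsum_eq_zero_of_not_summable h
  rw [hf.2] at h0
  norm_num at h0

private lemma pmf_sum_le {X : Type*} {f : X → ℝ} (hf : IsPMF f) (s : Finset X) :
    ∑ x ∈ s, f x ≤ 1 := by
  rw [← hf.2]
  exact Summable.sum_le_tsum s (fun x _ => hf.1 x) (pmf_summable hf)

private lemma dTV_finset {X : Type*} {f p : X → ℝ} (hf : IsPMF f) (hp : IsPMF p)
    (s : Finset X) : ∑ x ∈ s, |f x - p x| ≤ 2 * dTV f p := by
  have hsum : Summable (fun x => |f x - p x|) :=
    ((pmf_summable hf).sub (pmf_summable hp)).abs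
  have : ∑ x ∈ s, |f x - p x| ≤ ∑' x, |f x - p x| :=
    Summable.sum_le_tsum s (fun x _ => abs_nonneg _) hsum
  unfold dTV; linarith

private lemma dTV_ge_of_finset₁ {X : Type*} {f p : X → ℝ} (hf : IsPMF f) (hp : IsPMF p)
    (s : Finset X) : ∑ x ∈ s, (p x - f x) ≤ 2 * dTV f p := by
  refine le_trans (Finset.sum_le_sum fun x _ => ?_) (dTV_finset hf hp s)
  rw [abs_sub_comm]; exact le_abs_self _

private lemma dTV_ge_of_finset₂ {X : Type*} {f p : X → ℝ} (hf : IsPMF f) (hp : IsPMF p)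
    (s : Finset X) : ∑ x ∈ s, (f x - p x) ≤ 2 * dTV f p := by
  refine le_trans (Finset.sum_le_sum fun x _ => ?_) (dTV_finset hf hp s)
  exact le_abs_self _


/-- support superset finset -/
def suppF (M jj : ℕ) : Finset (ℕ × ℕ) :=
  insert (0,0) ((Finset.range M).image fun x => (x, 2*jj+1))

private lemma pDist_zero (γ : ℝ) (B : Finset ℕ) (jj : ℕ) : pDist γ B jj (0,0) = 1 - γ := by
  simp [pDist]

private lemma pDist_pt (γ : ℝ) (B : Finset ℕ) (jj x : ℕ) :
    pDist γ B jj (x, 2*jj+1) = if x ∈ B then γ / (B.card : ℝ) else 0 := by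
  have : ((x, 2*jj+1) : ℕ × ℕ) ≠ (0,0) := by simp [Prod.ext_iff]
  simp [pDist, this]

private lemma pDist_outside {γ : ℝ} {B : Finset ℕ} {M jj : ℕ} (hB : B ⊆ Finset.range M)
    {y : ℕ × ℕ} (hy : y ∉ suppF M jj) : pDist γ B jj y = 0 := by
  simp only [suppF, Finset.mem_insert, Finset.mem_image, Finset.mem_range, not_or, not_exists] at hy
  obtain ⟨hy0, hy1⟩ := hy
  have h2 : ¬ (y.1 ∈ B ∧ y.2 = 2*jj+1) := by
    rintro ⟨hmem, hsnd⟩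
    exact hy1 y.1 ⟨Finset.mem_range.mp (hB hmem), by rw [← hsnd]⟩
  simp only [pDist]
  rw [if_neg hy0, if_neg h2]; ring

private lemma pDist_sum_suppF {γ : ℝ} {B : Finset ℕ} {M jj : ℕ} (hB : B ⊆ Finset.range M)
    (hcard : 0 < B.card) :
    ∑ y ∈ suppF M jj, pDist γ B jj y = 1 := by
  have hnot : ((0,0) : ℕ × ℕ) ∉ (Finset.range M).image fun x => (x, 2*jj+1) := by
    simp [Prod.ext_iff]
  have hinj : ∀ x ∈ Finset.range M, ∀ y ∈ Finset.range M,
      ((x, 2*jj+1) : ℕ × ℕ) = (y, 2*jj+1) → x = y := by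
    intro x _ y _ h; exact (Prod.ext_iff.mp h).1
  rw [suppF, Finset.sum_insert hnot, Finset.sum_image hinj, pDist_zero]
  have : ∀ x ∈ Finset.range M, pDist γ B jj (x, 2*jj+1) = if x ∈ B then γ / (B.card : ℝ) else 0 :=
    fun x _ => pDist_pt γ B jj x
  rw [Finset.sum_congr rfl this, Finset.sum_ite_mem, Finset.inter_eq_right.mpr hB,
    Finset.sum_const, nsmul_eq_mul]
  field_simp
  ring

private lemma pDist_nonneg {γ : ℝ} (hγ0 : 0 ≤ γ) (hγ1 : γ ≤ 1) (B : Finset ℕ) (jj : ℕ)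
    (x : ℕ × ℕ) : 0 ≤ pDist γ B jj x := by
  unfold pDist
  have : (0:ℝ) ≤ γ / (B.card : ℝ) := by positivity
  split_ifs <;> simp <;> linarith

private lemma pDist_isPMF {γ : ℝ} {B : Finset ℕ} {M jj : ℕ} (hB : B ⊆ Finset.range M)
    (hcard : 0 < B.card) (hγ0 : 0 ≤ γ) (hγ1 : γ ≤ 1) : IsPMF (pDist γ B jj) := by
  refine ⟨pDist_nonneg hγ0 hγ1 B jj, ?_⟩
  rw [tsum_eq_sum (s := suppF M jj) (fun y hy => pDist_outside hB hy)]
  exact pDist_sum_suppF hB hcard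


private lemma iidProb_eq_sum {n : ℕ} {p : ℕ × ℕ → ℝ} {s : Finset (ℕ × ℕ)}
    (hp : ∀ y ∉ s, p y = 0) (E : Set (Fin n → ℕ × ℕ)) :
    iidProb p n E = ∑ S ∈ Fintype.piFinset (fun _ : Fin n => s),
      E.indicator (fun T => ∏ i, p (T i)) S := by
  classical
  refine tsum_eq_sum fun S hS => ?_
  rw [Fintype.mem_piFinset] at hS
  push_neg at hS
  obtain ⟨i, hi⟩ := hS
  have hz : (∏ i, p (S i)) = 0 := Finset.prod_eq_zero (Finset.mem_univ i) (hp _ hi)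
  rw [Set.indicator_apply]
  split_ifs <;> simp [hz]

/-- seen set -/
def Vs (M jj : ℕ) {n : ℕ} (S : Fin n → ℕ × ℕ) : Finset ℕ :=
  (Finset.range M).filter (fun x => ∃ i, S i = (x, 2*jj+1))

noncomputable def wfun (γ : ℝ) (N : ℕ) {n : ℕ} (S : Fin n → ℕ × ℕ) : ℝ :=
  ∏ i, (if S i = (0,0) then 1 - γ else γ / (N : ℝ))

private lemma card_Vs_le {M jj n : ℕ} (S : Fin n → ℕ × ℕ) : (Vs M jj S).card ≤ n := by
  classical
  have hsub : Vs M jj S ⊆ Finset.image (fun i => (S i).1) Finset.univ := by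
    intro x hx
    obtain ⟨-, i, hi⟩ := Finset.mem_filter.mp hx
    exact Finset.mem_image.mpr ⟨i, Finset.mem_univ i, by rw [hi]⟩
  calc (Vs M jj S).card ≤ _ := Finset.card_le_card hsub
    _ ≤ (Finset.univ : Finset (Fin n)).card := Finset.card_image_le
    _ = n := by simp

private lemma prod_pDist {n N M jj : ℕ} {γ : ℝ} {T : Finset ℕ} (hT : T ⊆ Finset.range M)
    (hcard : T.card = N) (S : Fin n → ℕ × ℕ)
    (hS : S ∈ Fintype.piFinset (fun _ : Fin n => suppF M jj)) :
    (∏ i, pDist γ T jj (S i)) = if Vs M jj S ⊆ T then wfun γ N S else 0 := by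
  classical
  rw [Fintype.mem_piFinset] at hS
  by_cases hVT : Vs M jj S ⊆ T
  · rw [if_pos hVT]
    refine Finset.prod_congr rfl fun i _ => ?_
    by_cases h0 : S i = (0,0)
    · rw [h0]; simp [pDist]
    · have := hS i
      simp only [suppF, Finset.mem_insert, Finset.mem_image, Finset.mem_range] at this
      obtain ⟨x, hxM, hxi⟩ := this.resolve_left h0
      have hxV : x ∈ Vs M jj S :=
        Finset.mem_filter.mpr ⟨Finset.mem_range.mpr hxM, ⟨i, hxi.symm⟩⟩
      have hxT : x ∈ T := hVT hxV
      rw [← hxi]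
      have hne : ((x, 2*jj+1) : ℕ × ℕ) ≠ (0,0) := by simp [Prod.ext_iff]
      simp [pDist, hne, hxT, hcard]
  · rw [if_neg hVT]
    obtain ⟨x, hxV, hxT⟩ := Finset.not_subset.mp hVT
    obtain ⟨-, i, hi⟩ := Finset.mem_filter.mp hxV
    refine Finset.prod_eq_zero (Finset.mem_univ i) ?_
    have hne : ((x, 2*jj+1) : ℕ × ℕ) ≠ (0,0) := by simp [Prod.ext_iff]
    rw [hi]
    simp [pDist, hne, hxT]

private lemma sum_prod_pDist {n N M jj : ℕ} {γ : ℝ} {T : Finset ℕ} (hT : T ⊆ Finset.range M)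
    (hcard : T.card = N) (hsum : ∑ y ∈ suppF M jj, pDist γ T jj y = 1) :
    ∑ S ∈ Fintype.piFinset (fun _ : Fin n => suppF M jj),
      (if Vs M jj S ⊆ T then wfun γ N S else 0) = 1 := by
  classical
  have h1 : ∀ S ∈ Fintype.piFinset (fun _ : Fin n => suppF M jj),
      (if Vs M jj S ⊆ T then wfun γ N S else 0) = ∏ i, pDist γ T jj (S i) :=
    fun S hS => (prod_pDist hT hcard S hS).symm
  rw [Finset.sum_congr rfl h1, ← Finset.prod_univ_sum]
  simp [hsum]

private lemma card_filter_superset {M N : ℕ} (W : Finset ℕ) (hW : W ⊆ Finset.range M)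
    (hWN : W.card ≤ N) :
    (((Finset.range M).powersetCard N).filter (fun T => W ⊆ T)).card
      = (M - W.card).choose (N - W.card) := by
  classical
  have key : (((Finset.range M).powersetCard N).filter (fun T => W ⊆ T)).card
      = ((Finset.range M \ W).powersetCard (N - W.card)).card := by
    apply Finset.card_bij (fun T _ => T \ W)
    · intro T hT
      simp only [Finset.mem_filter, Finset.mem_powersetCard] at hT ⊢
      obtain ⟨⟨hTsub, hTcard⟩, hWT⟩ := hT
      exact ⟨Finset.sdiff_subset_sdiff hTsub le_rfl,
        by rw [Finset.card_sdiff_of_subset hWT, hTcard]⟩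
    · intro T1 h1 T2 h2 heq
      simp only [Finset.mem_filter, Finset.mem_powersetCard] at h1 h2
      have e1 : T1 = T1 \ W ∪ W := (Finset.sdiff_union_of_subset h1.2).symm
      have e2 : T2 = T2 \ W ∪ W := (Finset.sdiff_union_of_subset h2.2).symm
      rw [e1, e2, heq]
    · intro U hU
      rw [Finset.mem_powersetCard] at hU
      obtain ⟨hUsub, hUcard⟩ := hU
      have hdisj : Disjoint U W := by
        refine Finset.disjoint_left.mpr fun a ha => ?_
        exact (Finset.mem_sdiff.mp (hUsub ha)).2
      refine ⟨U ∪ W, ?_, ?_⟩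
      · simp only [Finset.mem_filter, Finset.mem_powersetCard]
        refine ⟨⟨?_, ?_⟩, Finset.subset_union_right⟩
        · exact Finset.union_subset (hUsub.trans Finset.sdiff_subset) hW
        · rw [Finset.card_union_of_disjoint hdisj, hUcard]
          omega
      · rw [Finset.union_sdiff_right, Finset.sdiff_eq_self_of_disjoint hdisj]
  rw [key, Finset.card_powersetCard, Finset.card_sdiff_of_subset hW, Finset.card_range]

-- choose ratio inequality in ℝ
private lemma choose_ratio {M N v n : ℕ} (hv : v ≤ n) (hn : n < N) (hNM : N ≤ M) :
    ((M - v - 1).choose (N - v - 1) : ℝ) * (M - n : ℝ)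
      ≤ ((M - v).choose (N - v) : ℝ) * N := by
  have hvN : v < N := lt_of_le_of_lt hv hn
  have hvM : v < M := lt_of_lt_of_le hvN hNM
  have hid : (M - v) * (M - v - 1).choose (N - v - 1) = (M - v).choose (N - v) * (N - v) := by
    have := Nat.add_one_mul_choose_eq (M - v - 1) (N - v - 1)
    have e1 : M - v - 1 + 1 = M - v := by omega
    have e2 : N - v - 1 + 1 = N - v := by omega
    rw [e1, e2] at this
    exact this
  have hidR : ((M:ℝ) - v) * ((M - v - 1).choose (N - v - 1) : ℝ)
      = ((M - v).choose (N - v) : ℝ) * ((N:ℝ) - v) := by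
    have := congrArg (fun t : ℕ => (t : ℝ)) hid
    push_cast at this
    rw [Nat.cast_sub hvM.le, Nat.cast_sub hvN.le] at this
    convert this using 2 <;> push_cast <;> ring
  -- now:  C' * (M-n) ≤ C' * (M-v) = C*(N-v)*? ... careful
  have hC' : (0:ℝ) ≤ ((M - v - 1).choose (N - v - 1) : ℝ) := Nat.cast_nonneg _
  have hC : (0:ℝ) ≤ ((M - v).choose (N - v) : ℝ) := Nat.cast_nonneg _
  have h1 : ((M - v - 1).choose (N - v - 1) : ℝ) * ((M:ℝ) - n)
      ≤ ((M - v - 1).choose (N - v - 1) : ℝ) * ((M:ℝ) - v) := by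
    apply mul_le_mul_of_nonneg_left _ hC'
    have : (v:ℝ) ≤ n := by exact_mod_cast hv
    linarith
  have h2 : ((M - v).choose (N - v) : ℝ) * ((N:ℝ) - v) ≤ ((M - v).choose (N - v) : ℝ) * N := by
    apply mul_le_mul_of_nonneg_left _ hC
    have : (0:ℝ) ≤ (v:ℝ) := Nat.cast_nonneg _
    linarith
  calc ((M - v - 1).choose (N - v - 1) : ℝ) * ((M:ℝ) - n)
      ≤ ((M - v - 1).choose (N - v - 1) : ℝ) * ((M:ℝ) - v) := h1
    _ = ((M - v).choose (N - v) : ℝ) * ((N:ℝ) - v) := by rw [← hidR]; ring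
    _ ≤ ((M - v).choose (N - v) : ℝ) * N := h2


private def qsupp (A : ℕ → Finset ℕ) (i jj : ℕ) : Finset (ℕ × ℕ) :=
  insert (0,0) (insert (i, 2*jj+2) ((A i).image fun x => (x, 2*jj+1)))

private lemma qDist_outside {A : ℕ → Finset ℕ} {i jj k : ℕ} {y : ℕ × ℕ}
    (hy : y ∉ qsupp A i jj) : qDist A i jj k y = 0 := by
  simp only [qsupp, Finset.mem_insert, Finset.mem_image, not_or, not_exists] at hy
  obtain ⟨h0, h2, h1⟩ := hy
  have hc : ¬ (y.1 ∈ A i ∧ y.2 = 2*jj+1) := by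
    rintro ⟨hmem, hsnd⟩
    exact h1 y.1 ⟨hmem, by rw [← hsnd]⟩
  simp only [qDist]
  rw [if_neg h0, if_neg hc, if_neg h2]; ring

private lemma qDist_summable (A : ℕ → Finset ℕ) (i jj k : ℕ) : Summable (qDist A i jj k) :=
  summable_of_ne_finset_zero (s := qsupp A i jj) (fun _ hy => qDist_outside hy)

private lemma qDist_tsum (A : ℕ → Finset ℕ) {i : ℕ} (jj k : ℕ) (hcard : 0 < (A i).card) :
    ∑' x, qDist A i jj k x = 1 := by
  rw [tsum_eq_sum (s := qsupp A i jj) (fun y hy => qDist_outside hy)]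
  have h1 : ((0,0) : ℕ × ℕ) ∉ insert (i, 2*jj+2) ((A i).image fun x => (x, 2*jj+1)) := by
    simp [Prod.ext_iff]
  have h2 : ((i, 2*jj+2) : ℕ × ℕ) ∉ (A i).image fun x => (x, 2*jj+1) := by
    simp [Prod.ext_iff, show ¬(2*jj+1 = 2*jj+2) by omega]
  have hinj : ∀ x ∈ A i, ∀ y ∈ A i, ((x, 2*jj+1) : ℕ × ℕ) = (y, 2*jj+1) → x = y := by
    intro x _ y _ h; exact (Prod.ext_iff.mp h).1
  rw [qsupp, Finset.sum_insert h1, Finset.sum_insert h2, Finset.sum_image hinj]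
  have v0 : qDist A i jj k (0,0) = 1 - 1/(jj:ℝ) := by
    simp [qDist, Prod.ext_iff]
  have v2 : qDist A i jj k (i, 2*jj+2) = 1/(k:ℝ) := by
    simp [qDist, Prod.ext_iff, show ¬(2*jj+2 = 2*jj+1) by omega, show ¬(2*jj+2 = 0) by omega]
  have v1 : ∀ x ∈ A i, qDist A i jj k (x, 2*jj+1)
      = (1/(jj:ℝ) - 1/(k:ℝ)) / ((A i).card : ℝ) := by
    intro x hx
    simp [qDist, Prod.ext_iff, hx, show ¬(2*jj+1 = 2*jj+2) by omega,
      show ¬(2*jj+1 = 0) by omega]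
  rw [v0, v2, Finset.sum_congr rfl v1, Finset.sum_const, nsmul_eq_mul]
  have : ((A i).card : ℝ) ≠ 0 := by positivity
  field_simp
  ring

private lemma div_le_div_of_nonneg_right' {a b c : ℝ} (h : a ≤ b) (hc : 0 < c) :
    a / c ≤ b / c := by
  rw [div_le_div_iff₀ hc hc]
  exact mul_le_mul_of_nonneg_right h hc.le

private lemma exists_corruption (A : ℕ → Finset ℕ) (i jj k : ℕ) (hjj : 1 ≤ jj)
    (hjjk : (jj:ℝ) ≤ (k:ℝ)) (hcard : 0 < (A i).card)
    {η γ : ℝ} (hη0 : 0 < η) (hη1 : η < 1) (hkη : 1/(k:ℝ) ≤ η)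
    (hγ : γ = min 1 ((1/(jj:ℝ) - 1/(k:ℝ))/(1-η)))
    (hptsum : ∑' x, pDist γ (A i) jj x = 1) :
    ∃ q : ℕ × ℕ → ℝ, IsPMF q ∧ mix η q (pDist γ (A i) jj) = qDist A i jj k := by
  have hjpos : (0:ℝ) < (jj:ℝ) := by exact_mod_cast hjj
  have hkpos : (0:ℝ) < (k:ℝ) := lt_of_lt_of_le hjpos hjjk
  have hjk : 1/(k:ℝ) ≤ 1/(jj:ℝ) := one_div_le_one_div_of_le hjpos hjjk
  have h1η : (0:ℝ) < 1 - η := by linarith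
  have hγle : (1-η) * γ ≤ 1/(jj:ℝ) - 1/(k:ℝ) := by
    rw [hγ]
    calc (1-η) * min 1 ((1/(jj:ℝ) - 1/(k:ℝ))/(1-η))
        ≤ (1-η) * ((1/(jj:ℝ) - 1/(k:ℝ))/(1-η)) :=
          mul_le_mul_of_nonneg_left (min_le_right _ _) h1η.le
      _ = 1/(jj:ℝ) - 1/(k:ℝ) := by field_simp
  have hγlb : η + (1-η) * γ ≥ 1/(jj:ℝ) := by
    rcases min_cases 1 ((1/(jj:ℝ) - 1/(k:ℝ))/(1-η)) with ⟨he, -⟩ | ⟨he, -⟩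
    · rw [hγ, he]
      have : 1/(jj:ℝ) ≤ 1 := by
        rw [div_le_one hjpos]; exact_mod_cast hjj
      linarith
    · rw [hγ, he]
      have heq : (1-η) * ((1/(jj:ℝ) - 1/(k:ℝ))/(1-η)) = 1/(jj:ℝ) - 1/(k:ℝ) := by
        field_simp
      rw [heq]; linarith
  have hγ0 : 0 ≤ γ := by
    rw [hγ]
    refine le_min (by norm_num) (div_nonneg (by linarith) h1η.le)
  have hγ1 : γ ≤ 1 := by rw [hγ]; exact min_le_left _ _
  have hcR : (0:ℝ) < ((A i).card : ℝ) := by exact_mod_cast hcard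
  refine ⟨fun x => (qDist A i jj k x - (1-η) * pDist γ (A i) jj x) / η, ⟨?_, ?_⟩, ?_⟩
  · intro x
    apply div_nonneg _ hη0.le
    rw [sub_nonneg]
    obtain ⟨x1, x2⟩ := x
    by_cases c2 : x1 ∈ A i ∧ x2 = 2*jj+1
    · obtain ⟨hx1, rfl⟩ := c2
      have vq : qDist A i jj k (x1, 2*jj+1) = (1/(jj:ℝ) - 1/(k:ℝ)) / ((A i).card : ℝ) := by
        simp [qDist, Prod.ext_iff, hx1, show ¬(2*jj+1 = 2*jj+2) by omega,
          show ¬(2*jj+1 = 0) by omega]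
      have vp : pDist γ (A i) jj (x1, 2*jj+1) = γ / ((A i).card : ℝ) := by
        simp [pDist, Prod.ext_iff, hx1, show ¬(2*jj+1 = 0) by omega]
      rw [vq, vp, mul_div_assoc']
      exact div_le_div_of_nonneg_right' hγle hcR
    · by_cases c1 : ((x1, x2) : ℕ × ℕ) = (0,0)
      · rw [c1]
        have vq : qDist A i jj k (0,0) = 1 - 1/(jj:ℝ) := by simp [qDist, Prod.ext_iff]
        have vp : pDist γ (A i) jj (0,0) = 1 - γ := by simp [pDist, Prod.ext_iff]
        rw [vq, vp]
        nlinarith [hγlb]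
      · by_cases c3 : ((x1, x2) : ℕ × ℕ) = (i, 2*jj+2)
        · rw [c3]
          have vq : qDist A i jj k (i, 2*jj+2) = 1/(k:ℝ) := by
            simp [qDist, Prod.ext_iff, show ¬(2*jj+2 = 2*jj+1) by omega,
              show ¬(2*jj+2 = 0) by omega]
          have vp : pDist γ (A i) jj (i, 2*jj+2) = 0 := by
            simp [pDist, Prod.ext_iff, show ¬(2*jj+2 = 2*jj+1) by omega,
              show ¬(2*jj+2 = 0) by omega]
          rw [vq, vp, mul_zero]
          positivity
        · have vq : qDist A i jj k (x1, x2) = 0 := by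
            simp only [qDist]
            rw [if_neg c1, if_neg c2, if_neg c3]; ring
          have vp : pDist γ (A i) jj (x1, x2) = 0 := by
            simp only [pDist]
            rw [if_neg c1, if_neg c2]; ring
          rw [vq, vp]
          norm_num
  · have hpsummable : Summable (pDist γ (A i) jj) := by
      apply summable_of_ne_finset_zero (s := qsupp A i jj)
      intro y hy
      simp only [qsupp, Finset.mem_insert, Finset.mem_image, not_or, not_exists] at hy
      obtain ⟨h0, -, h1⟩ := hy
      have hc : ¬ (y.1 ∈ A i ∧ y.2 = 2*jj+1) := by
        rintro ⟨hmem, hsnd⟩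
        exact h1 y.1 ⟨hmem, by rw [← hsnd]⟩
      simp only [pDist]
      rw [if_neg h0, if_neg hc]; ring
    have hs1 : Summable (fun x => (1-η) * pDist γ (A i) jj x) := hpsummable.mul_left _
    have e : (fun x => (qDist A i jj k x - (1-η) * pDist γ (A i) jj x) / η)
        = fun x => (1/η) * (qDist A i jj k x - (1-η) * pDist γ (A i) jj x) := by
      funext x; field_simp
    rw [e, tsum_mul_left, (qDist_summable A i jj k).tsum_sub hs1, tsum_mul_left, hptsum,
      qDist_tsum A jj k hcard]
    field_simp
    ring
  · funext x
    simp only [mix]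
    field_simp
    ring


private lemma counting_lemma {M N n jj : ℕ} {γ r c : ℝ} {f : ℕ × ℕ → ℝ} (hf : IsPMF f)
    (V : Finset ℕ) (hV : V ⊆ Finset.range M) (hv : V.card ≤ n)
    (hn : n < N) (hNM : N ≤ M) (hγ0 : 0 ≤ γ) (hγ1 : γ ≤ 1)
    (hc : c = (γ - 2*r)/2) (hcpos : 0 < c) (hrpos : 0 < r)
    (hNγ : (n:ℝ) * γ ≤ c/4 * N)
    (hcase : r < 3/8 * c)
    (hM : 3 * (N:ℝ) ≤ c * ((M:ℝ) - n)) :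
    ((((Finset.range M).powersetCard N).filter
        (fun T => V ⊆ T ∧ dTV f (pDist γ T jj) ≤ r)).card : ℝ)
      ≤ 1/3 * ((((Finset.range M).powersetCard N).filter (fun T => V ⊆ T)).card : ℝ) := by
  classical
  have hN0 : 0 < N := by omega
  have hNR : (0:ℝ) < (N:ℝ) := by exact_mod_cast hN0
  set F : Finset ℕ → ℝ := fun W => ∑ x ∈ W, f (x, 2*jj+1) with hF
  have hFnn : ∀ W : Finset ℕ, 0 ≤ F W := fun W => Finset.sum_nonneg fun x _ => hf.1 _
  have himg : ∀ (W : Finset ℕ) (g : ℕ × ℕ → ℝ),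
      ∑ y ∈ W.image (fun x => (x, 2*jj+1)), g y = ∑ x ∈ W, g (x, 2*jj+1) := by
    intro W g
    apply Finset.sum_image
    intro x _ y _ h
    exact (Prod.ext_iff.mp h).1
  set TT := (Finset.range M).powersetCard N with hTT
  set tV := TT.filter (fun T => V ⊆ T) with htV
  set gd := TT.filter (fun T => V ⊆ T ∧ dTV f (pDist γ T jj) ≤ r) with hgd
  have hTmem : ∀ T ∈ TT, T ⊆ Finset.range M ∧ T.card = N := by
    intro T hT
    exact Finset.mem_powersetCard.mp hT
  have fact1 : ∀ T ∈ TT, dTV f (pDist γ T jj) ≤ r → 2*c ≤ F T := by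
    intro T hT hdTV
    obtain ⟨hTsub, hTcard⟩ := hTmem T hT
    have hpmf : IsPMF (pDist γ T jj) := pDist_isPMF hTsub (by omega) hγ0 hγ1
    have h1 := dTV_ge_of_finset₁ hf hpmf (T.image (fun x => (x, 2*jj+1)))
    rw [himg] at h1
    have h2 : ∑ x ∈ T, (pDist γ T jj (x, 2*jj+1) - f (x, 2*jj+1)) = γ - F T := by
      have hval : ∀ x ∈ T, pDist γ T jj (x, 2*jj+1) - f (x, 2*jj+1)
          = γ / (N:ℝ) - f (x, 2*jj+1) := by
        intro x hx
        rw [pDist_pt, if_pos hx, hTcard]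
      rw [Finset.sum_congr rfl hval, Finset.sum_sub_distrib, Finset.sum_const, hTcard,
        nsmul_eq_mul, hF]
      field_simp
    rw [h2] at h1
    have h3 : γ - F T ≤ 2*r := le_trans h1 (by linarith)
    rw [hc]
    linarith
  by_cases hgood : gd.Nonempty
  · obtain ⟨T₀, hT₀⟩ := hgood
    have hT₀m := Finset.mem_filter.mp hT₀
    have hT₀TT := hT₀m.1
    have hdT₀ := hT₀m.2.2
    obtain ⟨hT₀sub, hT₀card⟩ := hTmem T₀ hT₀TT
    have hFV : F V ≤ c := by
      have hpmf : IsPMF (pDist γ T₀ jj) := pDist_isPMF hT₀sub (by omega) hγ0 hγ1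
      have h1 := dTV_ge_of_finset₂ hf hpmf (V.image (fun x => (x, 2*jj+1)))
      rw [himg] at h1
      have h2 : F V - (V.card : ℝ) * (γ / N)
          ≤ ∑ x ∈ V, (f (x, 2*jj+1) - pDist γ T₀ jj (x, 2*jj+1)) := by
        rw [Finset.sum_sub_distrib]
        have hb : ∑ x ∈ V, pDist γ T₀ jj (x, 2*jj+1) ≤ (V.card : ℝ) * (γ / N) := by
          rw [← nsmul_eq_mul, ← Finset.sum_const]
          apply Finset.sum_le_sum
          intro x hx
          rw [pDist_pt, hT₀card]
          split_ifs
          · exact le_rfl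
          · positivity
        rw [hF]
        simp only
        linarith
      have h3 : (V.card : ℝ) * (γ / N) ≤ c/4 := by
        have hvn : (V.card : ℝ) ≤ (n : ℝ) := by exact_mod_cast hv
        have hle : (V.card : ℝ) * γ ≤ (n:ℝ) * γ := mul_le_mul_of_nonneg_right hvn hγ0
        rw [mul_div_assoc', div_le_iff₀ hNR]
        calc (V.card : ℝ) * γ ≤ (n:ℝ) * γ := hle
          _ ≤ c/4 * N := hNγ
      have h4 : 2 * dTV f (pDist γ T₀ jj) ≤ 2 * r := by linarith
      linarith
    have hgoodT : ∀ T ∈ gd, c ≤ F (T \ V) := by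
      intro T hT
      have hm := Finset.mem_filter.mp hT
      have hFT := fact1 T hm.1 hm.2.2
      have hsplit : F (T \ V) = F T - F V := by
        have hsd := Finset.sum_sdiff (f := fun x => f (x, 2*jj+1)) hm.2.1
        rw [hF]
        simp only
        linarith [hsd]
      rw [hsplit]
      linarith
    have step1 : c * (gd.card : ℝ) ≤ ∑ T ∈ gd, F (T \ V) := by
      calc c * (gd.card : ℝ) = ∑ _T ∈ gd, c := by
            rw [Finset.sum_const, nsmul_eq_mul]; ring
        _ ≤ _ := Finset.sum_le_sum hgoodT
    have hsubgd : gd ⊆ tV := by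
      intro T hT
      have hm := Finset.mem_filter.mp hT
      exact Finset.mem_filter.mpr ⟨hm.1, hm.2.1⟩
    have step2 : ∑ T ∈ gd, F (T \ V) ≤ ∑ T ∈ tV, F (T \ V) :=
      Finset.sum_le_sum_of_subset_of_nonneg hsubgd (fun T _ _ => hFnn _)
    have step3 : ∑ T ∈ tV, F (T \ V)
        = ∑ x ∈ Finset.range M \ V,
            f (x, 2*jj+1) * ((tV.filter (fun T => x ∈ T)).card : ℝ) := by
      have e1 : ∀ T ∈ tV, F (T \ V)
          = ∑ x ∈ Finset.range M \ V, (if x ∈ T then f (x, 2*jj+1) else 0) := by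
        intro T hT
        have hm := Finset.mem_filter.mp hT
        obtain ⟨hTsub, -⟩ := hTmem T hm.1
        have hTV : T \ V = (Finset.range M \ V).filter (fun x => x ∈ T) := by
          ext x
          simp only [Finset.mem_sdiff, Finset.mem_filter]
          constructor
          · rintro ⟨hxT, hxV⟩; exact ⟨⟨hTsub hxT, hxV⟩, hxT⟩
          · rintro ⟨⟨-, hxV⟩, hxT⟩; exact ⟨hxT, hxV⟩
        rw [hF]
        simp only
        rw [hTV, Finset.sum_filter]
      rw [Finset.sum_congr rfl e1, Finset.sum_comm]
      apply Finset.sum_congr rfl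
      intro x _
      rw [← Finset.sum_filter, Finset.sum_const, nsmul_eq_mul, mul_comm]
    have step4 : ∀ x ∈ Finset.range M \ V,
        ((tV.filter (fun T => x ∈ T)).card : ℝ)
          = ((M - V.card - 1).choose (N - V.card - 1) : ℝ) := by
      intro x hx
      obtain ⟨hxM, hxV⟩ := Finset.mem_sdiff.mp hx
      have e : tV.filter (fun T => x ∈ T) = TT.filter (fun T => insert x V ⊆ T) := by
        rw [htV, Finset.filter_filter]
        apply Finset.filter_congr
        intro T _
        simp only [Finset.insert_subset_iff]
        tauto
      have hcardins : (insert x V).card = V.card + 1 := Finset.card_insert_of_notMem hxV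
      rw [e, hTT, card_filter_superset (insert x V) (Finset.insert_subset hxM hV)
        (by omega), hcardins]
      congr 2 <;> omega
    have step5 : c * (gd.card : ℝ) ≤ ((M - V.card - 1).choose (N - V.card - 1) : ℝ) := by
      have h1 : ∑ x ∈ Finset.range M \ V,
          f (x, 2*jj+1) * ((tV.filter (fun T => x ∈ T)).card : ℝ)
          = ((M - V.card - 1).choose (N - V.card - 1) : ℝ)
            * ∑ x ∈ Finset.range M \ V, f (x, 2*jj+1) := by
        rw [Finset.mul_sum]
        apply Finset.sum_congr rfl
        intro x hx
        rw [step4 x hx]; ring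
      have h2 : ∑ x ∈ Finset.range M \ V, f (x, 2*jj+1) ≤ 1 := by
        rw [← himg (Finset.range M \ V) f]
        exact pmf_sum_le hf _
      have h3 : (0:ℝ) ≤ ((M - V.card - 1).choose (N - V.card - 1) : ℝ) := Nat.cast_nonneg _
      have hchain := step1.trans (step2.trans_eq step3)
      rw [h1] at hchain
      calc c * (gd.card : ℝ) ≤ _ := hchain
        _ ≤ ((M - V.card - 1).choose (N - V.card - 1) : ℝ) * 1 :=
            mul_le_mul_of_nonneg_left h2 h3
        _ = _ := mul_one _
    have hCV : (tV.card : ℝ) = ((M - V.card).choose (N - V.card) : ℝ) := by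
      rw [htV, hTT, card_filter_superset V hV (by omega)]
    have hratio := choose_ratio (M := M) (N := N) hv hn hNM
    have hMn : (0:ℝ) < (M:ℝ) - (n:ℝ) := by
      have h : n < M := by omega
      have h2 : (n:ℝ) < (M:ℝ) := by exact_mod_cast h
      linarith
    rw [hCV]
    have e1 := mul_le_mul_of_nonneg_right step5 hMn.le
    have hCnn : (0:ℝ) ≤ ((M - V.card).choose (N - V.card) : ℝ) := Nat.cast_nonneg _
    have e3 := mul_le_mul_of_nonneg_left hM hCnn
    have hgdnn : (0:ℝ) ≤ (gd.card : ℝ) := Nat.cast_nonneg _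
    nlinarith [e1, hratio, e3, hcpos, hMn, mul_pos hcpos hMn, hgdnn]
  · rw [Finset.not_nonempty_iff_eq_empty] at hgood
    rw [hgood]
    simp only [Finset.card_empty, Nat.cast_zero]
    positivity

end Aux

private lemma main_chain {n N M jj : ℕ} {γ r c : ℝ}
    (Alg : (m : ℕ) → (Fin m → ℕ×ℕ) → (ℕ×ℕ → ℝ)) (hlearn : IsLearner Alg)
    (hNn : n < N) (hNM : N ≤ M) (hγ0 : 0 ≤ γ) (hγ1 : γ ≤ 1)
    (hc : c = (γ - 2*r)/2) (hcpos : 0 < c) (hrpos : 0 < r)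
    (hNγ : (n:ℝ) * γ ≤ c/4 * N) (hcase : r < 3/8 * c)
    (hM : 3 * (N:ℝ) ≤ c * ((M:ℝ) - n))
    (hsucc : ∀ T ∈ (Finset.range M).powersetCard N,
      1/2 ≤ iidProb (pDist γ T jj) n {S | dTV (Alg n S) (pDist γ T jj) ≤ r}) :
    False := by
  classical
  set TT := (Finset.range M).powersetCard N with hTT
  have hTTpos : 0 < TT.card := by
    rw [hTT, Finset.card_powersetCard, Finset.card_range]
    exact Nat.choose_pos hNM
  set PA := Fintype.piFinset (fun _ : Fin n => suppF M jj) with hPA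
  have hN0 : 0 < N := by omega
  have hwnn : ∀ S : Fin n → ℕ × ℕ, 0 ≤ wfun γ N S := by
    intro S
    apply Finset.prod_nonneg
    intro i _
    split_ifs
    · linarith
    · positivity
  -- rewrite success probabilities as finite sums
  have key1 : ∀ T ∈ TT, iidProb (pDist γ T jj) n {S | dTV (Alg n S) (pDist γ T jj) ≤ r}
      = ∑ S ∈ PA, (if Vs M jj S ⊆ T ∧ dTV (Alg n S) (pDist γ T jj) ≤ r
          then wfun γ N S else 0) := by
    intro T hT
    obtain ⟨hTsub, hTcard⟩ := Finset.mem_powersetCard.mp hT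
    rw [iidProb_eq_sum (fun y hy => pDist_outside hTsub hy)]
    apply Finset.sum_congr rfl
    intro S hS
    rw [Set.indicator_apply]
    simp only [Set.mem_setOf_eq]
    have hprod := prod_pDist (γ := γ) hTsub hTcard S hS
    by_cases hd : dTV (Alg n S) (pDist γ T jj) ≤ r
    · rw [if_pos hd, hprod]
      by_cases hv : Vs M jj S ⊆ T
      · rw [if_pos hv, if_pos ⟨hv, hd⟩]
      · rw [if_neg hv, if_neg (by tauto)]
    · rw [if_neg hd, if_neg (by tauto)]
  -- lower bound
  have lower : (TT.card : ℝ) * (1/2)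
      ≤ ∑ T ∈ TT, ∑ S ∈ PA, (if Vs M jj S ⊆ T ∧ dTV (Alg n S) (pDist γ T jj) ≤ r
          then wfun γ N S else 0) := by
    calc (TT.card : ℝ) * (1/2) = ∑ _T ∈ TT, (1/2 : ℝ) := by
          rw [Finset.sum_const, nsmul_eq_mul]
      _ ≤ ∑ T ∈ TT, iidProb (pDist γ T jj) n {S | dTV (Alg n S) (pDist γ T jj) ≤ r} :=
          Finset.sum_le_sum hsucc
      _ = _ := Finset.sum_congr rfl key1
  -- upper bound
  have upper : ∑ T ∈ TT, ∑ S ∈ PA, (if Vs M jj S ⊆ T ∧ dTV (Alg n S) (pDist γ T jj) ≤ r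
          then wfun γ N S else 0)
      ≤ 1/3 * (TT.card : ℝ) := by
    rw [Finset.sum_comm]
    have inner1 : ∀ S ∈ PA,
        ∑ T ∈ TT, (if Vs M jj S ⊆ T ∧ dTV (Alg n S) (pDist γ T jj) ≤ r
          then wfun γ N S else 0)
        = wfun γ N S * ((TT.filter (fun T => Vs M jj S ⊆ T ∧
            dTV (Alg n S) (pDist γ T jj) ≤ r)).card : ℝ) := by
      intro S _
      rw [← Finset.sum_filter, Finset.sum_const, nsmul_eq_mul, mul_comm]
    have inner2 : ∀ S ∈ PA,
        wfun γ N S * ((TT.filter (fun T => Vs M jj S ⊆ T ∧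
            dTV (Alg n S) (pDist γ T jj) ≤ r)).card : ℝ)
        ≤ wfun γ N S * (1/3 * ((TT.filter (fun T => Vs M jj S ⊆ T)).card : ℝ)) := by
      intro S _
      apply mul_le_mul_of_nonneg_left _ (hwnn S)
      exact counting_lemma (hlearn n S) (Vs M jj S) (Finset.filter_subset _ _)
        (card_Vs_le S) hNn hNM hγ0 hγ1 hc hcpos hrpos hNγ hcase hM
    have inner3 : ∑ S ∈ PA, wfun γ N S * (1/3 * ((TT.filter
        (fun T => Vs M jj S ⊆ T)).card : ℝ)) = 1/3 * (TT.card : ℝ) := by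
      have e1 : ∀ S ∈ PA, wfun γ N S * (1/3 * ((TT.filter
          (fun T => Vs M jj S ⊆ T)).card : ℝ))
          = 1/3 * ∑ T ∈ TT, (if Vs M jj S ⊆ T then wfun γ N S else 0) := by
        intro S _
        rw [← Finset.sum_filter, Finset.sum_const, nsmul_eq_mul]
        ring
      rw [Finset.sum_congr rfl e1, ← Finset.mul_sum, Finset.sum_comm]
      have e2 : ∀ T ∈ TT, ∑ S ∈ PA, (if Vs M jj S ⊆ T then wfun γ N S else 0) = 1 := by
        intro T hT
        obtain ⟨hTsub, hTcard⟩ := Finset.mem_powersetCard.mp hT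
        exact sum_prod_pDist hTsub hTcard (pDist_sum_suppF hTsub (by omega))
      rw [Finset.sum_congr rfl e2, Finset.sum_const, nsmul_eq_mul, mul_one]
    calc ∑ S ∈ PA, ∑ T ∈ TT, (if Vs M jj S ⊆ T ∧ dTV (Alg n S) (pDist γ T jj) ≤ r
          then wfun γ N S else 0)
        = ∑ S ∈ PA, wfun γ N S * ((TT.filter (fun T => Vs M jj S ⊆ T ∧
            dTV (Alg n S) (pDist γ T jj) ≤ r)).card : ℝ) := Finset.sum_congr rfl inner1
      _ ≤ ∑ S ∈ PA, wfun γ N S * (1/3 * ((TT.filter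
            (fun T => Vs M jj S ⊆ T)).card : ℝ)) := Finset.sum_le_sum inner2
      _ = 1/3 * (TT.card : ℝ) := inner3
  have hTTR : (1:ℝ) ≤ (TT.card : ℝ) := by exact_mod_cast hTTpos
  linarith

set_option maxHeartbeats 2000000 in
/-- for `α > 1` and `g(t) = ⌈32α⌉·t²`, the class `Q_g` is not
`η`-subtractive `α`-robustly learnable for any `0 < η ≤ 1/(16α)`. -/
theorem Qg_quadratic_not_eta_subtractively_robust
    (A : ℕ → Finset ℕ) (hA_ne : ∀ i, (A i).Nonempty) (hA_inj : Function.Injective A)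
    (hA_surj : ∀ s : Finset ℕ, s.Nonempty → ∃ i, A i = s)
    (α : ℝ) (hα : 1 < α) (η : ℝ) (hη : 0 < η) (hη' : η ≤ 1 / (16 * α)) :
    ¬ EtaSubtractiveRobustlyLearnable
        (Qg A (fun t => ⌈(32:ℝ) * α⌉₊ * t ^ 2)) η α := by
  classical
  rintro ⟨Alg, hlearn, nC, hnC⟩
  -- basic arithmetic facts
  have hα0 : (0:ℝ) < α := by linarith
  have ha0 : (0:ℝ) < α * η := by positivity
  have ha16 : α * η ≤ 1/16 := by
    rw [le_div_iff₀ (by positivity : (0:ℝ) < 16 * α)] at hη'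
    nlinarith
  have hη1 : η < 1 := by nlinarith
  have h1η : (0:ℝ) < 1 - η := by linarith
  set K := ⌈(32:ℝ) * α⌉₊ with hKdef
  have hK32 : (32:ℝ) * α ≤ (K:ℝ) := Nat.le_ceil _
  have hK32' : (32:ℝ) ≤ (K:ℝ) := by nlinarith
  have hKpos : (0:ℝ) < (K:ℝ) := by linarith
  clear_value K
  -- choose jj minimal with K * jj^2 * η ≥ 1
  have hex : ∃ m : ℕ, 1 ≤ m ∧ 1 ≤ (K:ℝ) * (m:ℝ)^2 * η := by
    refine ⟨⌈1/((K:ℝ)*η)⌉₊ + 1, by omega, ?_⟩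
    have h1 : 1/((K:ℝ)*η) ≤ ((⌈1/((K:ℝ)*η)⌉₊ + 1 : ℕ) : ℝ) := by
      push_cast
      have := Nat.le_ceil (1/((K:ℝ)*η))
      linarith
    have hm1 : (1:ℝ) ≤ ((⌈1/((K:ℝ)*η)⌉₊ + 1 : ℕ) : ℝ) := by
      have h : (1:ℕ) ≤ ⌈1/((K:ℝ)*η)⌉₊ + 1 := by omega
      exact_mod_cast h
    have hKη : (0:ℝ) < (K:ℝ)*η := by positivity
    have h2 : ((⌈1/((K:ℝ)*η)⌉₊ + 1 : ℕ) : ℝ)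
        ≤ ((⌈1/((K:ℝ)*η)⌉₊ + 1 : ℕ) : ℝ)^2 := by nlinarith
    rw [div_le_iff₀ hKη] at h1
    nlinarith
  set jj := Nat.find hex with hjjdef
  obtain ⟨hjj1, hjjK⟩ := Nat.find_spec hex
  rw [← hjjdef] at hjj1 hjjK
  have hmin : ∀ m : ℕ, m < jj → ¬(1 ≤ m ∧ 1 ≤ (K:ℝ) * (m:ℝ)^2 * η) :=
    fun m hm => Nat.find_min hex (hjjdef ▸ hm)
  clear_value jj
  have hJ1 : (1:ℝ) ≤ (jj:ℝ) := by exact_mod_cast hjj1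
  have hJ0 : (0:ℝ) < (jj:ℝ) := by linarith
  set k := K * jj^2 with hkdef
  have hkR : ((k:ℕ):ℝ) = (K:ℝ) * (jj:ℝ)^2 := by
    rw [hkdef]; push_cast; ring
  have hkpos : (0:ℝ) < (k:ℝ) := by rw [hkR]; positivity
  have hkη : 1/(k:ℝ) ≤ η := by
    rw [div_le_iff₀ hkpos, hkR]
    nlinarith
  have hjjk : (jj:ℝ) ≤ (k:ℝ) := by
    rw [hkR]
    nlinarith
  have hjk : 1/(k:ℝ) ≤ 1/(jj:ℝ) := one_div_le_one_div_of_le hJ0 hjjk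
  have hkK : (1:ℝ)/(k:ℝ) ≤ (1/32) * (1/(jj:ℝ)) := by
    have he : (1/32 : ℝ) * (1/(jj:ℝ)) = 1/(32*(jj:ℝ)) := by
      field_simp
    rw [he]
    apply one_div_le_one_div_of_le (by positivity)
    rw [hkR]
    nlinarith
  clear_value k
  set γ := min 1 ((1/(jj:ℝ) - 1/(k:ℝ))/(1-η)) with hγdef
  have hγ1 : γ ≤ 1 := min_le_left _ _
  have hγ0 : 0 ≤ γ := le_min (by norm_num) (div_nonneg (by linarith) h1η.le)
  -- main lower bound on γ
  clear_value γ
  have hx : (31/32) * (1/(jj:ℝ)) ≤ (1/(jj:ℝ) - 1/(k:ℝ))/(1-η) := by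
    have h1 : 1/(jj:ℝ) - 1/(k:ℝ) ≥ (31/32) * (1/(jj:ℝ)) := by linarith
    have h2 : (1/(jj:ℝ) - 1/(k:ℝ))/(1-η) ≥ 1/(jj:ℝ) - 1/(k:ℝ) := by
      rw [ge_iff_le, le_div_iff₀ h1η]
      nlinarith
    linarith
  have hγbig : 35/4 * (α * η) ≤ γ := by
    rw [hγdef]
    rcases Nat.lt_or_ge jj 3 with hjj3 | hjj3
    · interval_cases jj
      · -- jj = 1
        refine le_min (by linarith) ?_
        norm_num at hx ⊢
        linarith
      · -- jj = 2
        have hK1 := hmin 1 (by omega)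
        push_neg at hK1
        have hKη1 : (K:ℝ) * ((1:ℕ):ℝ)^2 * η < 1 := hK1 le_rfl
        have ha32 : α * η < 1/32 := by
          norm_num at hKη1
          nlinarith
        refine le_min (by linarith) ?_
        norm_num at hx ⊢
        linarith
    · -- jj ≥ 3
      have hKm := hmin (jj - 1) (by omega)
      push_neg at hKm
      have hjm1 : 1 ≤ jj - 1 := by omega
      have hKm' : (K:ℝ) * ((jj - 1 : ℕ):ℝ)^2 * η < 1 := hKm hjm1
      have hcast : ((jj - 1 : ℕ):ℝ) = (jj:ℝ) - 1 := by
        rw [Nat.cast_sub hjj1]; norm_num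
      rw [hcast] at hKm'
      have hJ3 : (3:ℝ) ≤ (jj:ℝ) := by exact_mod_cast hjj3
      have hq : (jj:ℝ)^2 ≤ (9/4) * ((jj:ℝ)-1)^2 := by nlinarith
      have hKjη : (K:ℝ) * (jj:ℝ)^2 * η < 9/4 := by nlinarith
      have ht2 : (1/(jj:ℝ))^2 ≥ 128/9 * (α*η) := by
        have h1 : (1/(jj:ℝ))^2 = 1/((jj:ℝ)^2) := by field_simp
        rw [ge_iff_le, h1, le_div_iff₀ (by positivity : (0:ℝ) < (jj:ℝ)^2)]
        nlinarith
      have htle : 1/(jj:ℝ) ≤ 1/3 := by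
        rw [div_le_div_iff₀ hJ0 (by norm_num)]
        linarith
      have ht0 : (0:ℝ) < 1/(jj:ℝ) := by positivity
      have hlin : 1/(jj:ℝ) ≥ 3 * (1/(jj:ℝ))^2 := by nlinarith
      have hbig : (31/32:ℝ) * (1/(jj:ℝ)) ≥ 35/4 * (α*η) := by nlinarith
      refine le_min ?_ (le_trans hbig hx)
      · have hj1 : (1/(jj:ℝ)) ≤ 1 := by
          rw [div_le_one hJ0]; linarith
        nlinarith
  -- parameters
  set ε := α * η / 8 with hεdef
  have hεIoo : ε ∈ Set.Ioo (0:ℝ) 1 := ⟨by positivity, by rw [hεdef]; linarith⟩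
  have hδIoo : (1/2 : ℝ) ∈ Set.Ioo (0:ℝ) 1 := by norm_num
  set n := nC ε (1/2) with hndef
  set r := α * η + ε with hrdef
  have hr98 : r = 9/8 * (α*η) := by rw [hrdef, hεdef]; ring
  set c := (γ - 2*r)/2 with hcdef
  have hcge : 13/4 * (α*η) ≤ c := by rw [hcdef, hr98]; linarith
  have hcpos : 0 < c := by nlinarith
  have hrpos : 0 < r := by rw [hr98]; positivity
  have hcase : r < 3/8 * c := by
    rw [hr98]
    nlinarith
  set N := (n+1) * (⌈4*γ/c⌉₊ + 1) with hNdef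
  set M := n + 3*N*⌈1/c⌉₊ with hMdef
  have hNn : n < N := by
    have : 1 ≤ ⌈4*γ/c⌉₊ + 1 := by omega
    calc n < n + 1 := by omega
      _ ≤ (n+1) * (⌈4*γ/c⌉₊ + 1) := Nat.le_mul_of_pos_right _ (by omega)
  have hceil1 : 1 ≤ ⌈1/c⌉₊ := Nat.one_le_ceil_iff.mpr (by positivity)
  have hNM : N ≤ M := by
    calc N ≤ 3*N*1 := by omega
      _ ≤ 3*N*⌈1/c⌉₊ := by
          apply Nat.mul_le_mul_left
          omega
      _ ≤ M := by omega
  have hN0 : 0 < N := by omega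
  have hNγle : (n:ℝ) * γ ≤ c/4 * (N:ℝ) := by
    have h1 : 4*γ/c ≤ (⌈4*γ/c⌉₊ : ℝ) := Nat.le_ceil _
    have h2 : γ ≤ c/4 * ((⌈4*γ/c⌉₊ : ℝ) + 1) := by
      rw [div_le_iff₀ hcpos] at h1
      nlinarith
    have h3 : ((N:ℕ):ℝ) = ((n:ℝ)+1) * ((⌈4*γ/c⌉₊ : ℝ) + 1) := by
      rw [hNdef]; push_cast; ring
    have hn0 : (0:ℝ) ≤ (n:ℝ) := Nat.cast_nonneg _
    have hc4 : (0:ℝ) ≤ c/4 := by positivity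
    rw [h3]
    have hcl0 : (0:ℝ) ≤ (⌈4*γ/c⌉₊ : ℝ) + 1 := by positivity
    calc (n:ℝ) * γ ≤ (n:ℝ) * (c/4 * ((⌈4*γ/c⌉₊ : ℝ) + 1)) :=
          mul_le_mul_of_nonneg_left h2 hn0
      _ ≤ ((n:ℝ)+1) * (c/4 * ((⌈4*γ/c⌉₊ : ℝ) + 1)) := by nlinarith
      _ = c/4 * (((n:ℝ)+1) * ((⌈4*γ/c⌉₊ : ℝ) + 1)) := by ring
  have hMbig : 3 * (N:ℝ) ≤ c * ((M:ℝ) - (n:ℝ)) := by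
    have hMn : (M:ℝ) - (n:ℝ) = 3*(N:ℝ)*(⌈1/c⌉₊:ℝ) := by
      rw [hMdef]; push_cast; ring
    rw [hMn]
    have h1 : 1/c ≤ (⌈1/c⌉₊ : ℝ) := Nat.le_ceil _
    have h2 : 1 ≤ c * (⌈1/c⌉₊ : ℝ) := by
      rw [div_le_iff₀ hcpos] at h1
      linarith
    have hN0R : (0:ℝ) ≤ 3*(N:ℝ) := by positivity
    nlinarith
  -- each uniform-support distribution satisfies the subtractive-corruption premise,
  -- hence the learner succeeds on it
  have hsucc : ∀ T ∈ (Finset.range M).powersetCard N,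
      1/2 ≤ iidProb (pDist γ T jj) n {S | dTV (Alg n S) (pDist γ T jj) ≤ r} := by
    intro T hT
    obtain ⟨hTsub, hTcard⟩ := Finset.mem_powersetCard.mp hT
    have hTpos : 0 < T.card := by omega
    have hTne : T.Nonempty := Finset.card_pos.mp hTpos
    obtain ⟨i, hAi⟩ := hA_surj T hTne
    subst hAi
    have hppmf : IsPMF (pDist γ (A i) jj) := pDist_isPMF hTsub hTpos hγ0 hγ1
    have hptsum : ∑' x, pDist γ (A i) jj x = 1 := hppmf.2
    obtain ⟨q, hq, hmix⟩ :=
      exists_corruption A i jj k hjj1 hjjk hTpos hη hη1 hkη hγdef hptsum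
    have hmem : mix η q (pDist γ (A i) jj) ∈ Qg A (fun t => K * t ^ 2) := by
      rw [hmix]
      exact ⟨i, jj, hjj1, by rw [hkdef]⟩
    have hres := hnC (pDist γ (A i) jj) hppmf ⟨q, hq, hmem⟩ ε hεIoo (1/2) hδIoo n le_rfl
    rw [hrdef]
    linarith
  exact main_chain Alg hlearn hNn hNM hγ0 hγ1 hcdef hcpos hrpos hNγle hcase hMbig hsucc

end RobustDistLearn
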